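/- Let n ≥ 1, let i, j, k ∈ {1,…,n} be three pairwise distinct indices, let w > 0 and β ∈ ℝ. Let L° ∈ ℝ^{n×n} be the symmetric matrix with L°_{ii} = L°_{jj} = w, L°_{ij} = L°_{ji} = −w, and all other entries 0 (the Laplacian of the single edge (i,j) of weight w). Let ℒ ∈ ℝ^{n×n} be the symmetric matrix whose quadratic form is xᵀℒx = βw(x_i−x_k)² + βw(x_k−x_j)² + (2−β)w·x_i² + (β²−2β)w·x_k² + (2−β)w·x_j² (the generalized Laplacian of the graph with edges (i,k) and (k,j) each of weight βw, self-loops at i and j each of weight (2−β)w, and a self-loop at k of weight (β²−2β)w). Then ℒ − L° is positive semidefinite. -/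

import Mathlib

open Matrix

/-- Theorem 1 of the paper: replacing an edge (i,j) of weight w > 0 by
edges (i,k), (k,j) of weight βw, self-loops at i and j of weight (2−β)w, and a self-loop at
k of weight (β²−2β)w yields a generalized Laplacian ℒ with ℒ − L° positive semidefinite. -/
theorem stmt2 {n : ℕ} (hn : 1 ≤ n) (i j k : Fin n)
    (hij : i ≠ j) (hik : i ≠ k) (hjk : j ≠ k)
    (w β : ℝ) (hw : 0 < w)
    (L0 : Matrix (Fin n) (Fin n) ℝ)
    (hL0 : L0 = Matrix.of fun a b =>
      if (a = i ∧ b = i) ∨ (a = j ∧ b = j) then w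
      else if (a = i ∧ b = j) ∨ (a = j ∧ b = i) then -w
      else 0)
    (L : Matrix (Fin n) (Fin n) ℝ) (hLsym : L.IsSymm)
    (hquad : ∀ x : Fin n → ℝ,
      x ⬝ᵥ L.mulVec x =
        β * w * (x i - x k) ^ 2 + β * w * (x k - x j) ^ 2
          + (2 - β) * w * (x i) ^ 2 + (β ^ 2 - 2 * β) * w * (x k) ^ 2
          + (2 - β) * w * (x j) ^ 2) :
    (L - L0).PosSemidef := by
  have hQ0 : ∀ x : Fin n → ℝ, x ⬝ᵥ L0.mulVec x = w * (x i - x j) ^ 2 := by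
    intro x
    subst hL0
    simp only [dotProduct, mulVec, Matrix.of_apply]
    have key : ∀ a : Fin n,
        x a * ∑ b : Fin n, (if (a = i ∧ b = i) ∨ (a = j ∧ b = j) then w
          else if (a = i ∧ b = j) ∨ (a = j ∧ b = i) then -w else 0) * x b
        = (if a = i then x i * (w * x i - w * x j)
           else if a = j then x j * (w * x j - w * x i) else 0) := by
      intro a
      have hsum : ∀ a : Fin n,
          (∑ b : Fin n, (if (a = i ∧ b = i) ∨ (a = j ∧ b = j) then w
            else if (a = i ∧ b = j) ∨ (a = j ∧ b = i) then -w else 0) * x b)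
          = ∑ b ∈ ({i, j} : Finset (Fin n)),
            (if (a = i ∧ b = i) ∨ (a = j ∧ b = j) then w
            else if (a = i ∧ b = j) ∨ (a = j ∧ b = i) then -w else 0) * x b := by
        intro a
        refine (Finset.sum_subset (Finset.subset_univ _) ?_).symm
        intro b _ hb
        simp only [Finset.mem_insert, Finset.mem_singleton, not_or] at hb
        obtain ⟨hbi, hbj⟩ := hb
        simp [hbi, hbj]
      rw [hsum, Finset.sum_pair hij]
      by_cases hai : a = i
      · subst hai
        simp [hij, hij.symm, hik]
        left; ring
      · by_cases haj : a = j
        · subst haj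
          simp [hij, hij.symm, hai]
          left; ring
        · simp [hai, haj]
    calc (∑ a : Fin n, x a * ∑ b : Fin n,
          (if (a = i ∧ b = i) ∨ (a = j ∧ b = j) then w
            else if (a = i ∧ b = j) ∨ (a = j ∧ b = i) then -w else 0) * x b)
        = ∑ a : Fin n, (if a = i then x i * (w * x i - w * x j)
            else if a = j then x j * (w * x j - w * x i) else 0) := by
          exact Finset.sum_congr rfl fun a _ => key a
      _ = ∑ a ∈ ({i, j} : Finset (Fin n)),
            (if a = i then x i * (w * x i - w * x j)
            else if a = j then x j * (w * x j - w * x i) else 0) := by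
          refine (Finset.sum_subset (Finset.subset_univ _) ?_).symm
          intro a _ ha
          simp only [Finset.mem_insert, Finset.mem_singleton, not_or] at ha
          simp [ha.1, ha.2]
      _ = w * (x i - x j) ^ 2 := by
          rw [Finset.sum_pair hij]
          simp [hij, hij.symm]
          ring
  rw [Matrix.posSemidef_iff_dotProduct_mulVec]
  constructor
  · rw [Matrix.IsHermitian]
    have hL0sym : L0.IsSymm := by
      subst hL0
      ext a b
      simp only [Matrix.transpose_apply, Matrix.of_apply]
      by_cases h1 : (b = i ∧ a = i) ∨ (b = j ∧ a = j) <;>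
      by_cases h2 : (b = i ∧ a = j) ∨ (b = j ∧ a = i) <;>
        simp_all [and_comm, or_comm] <;> tauto
    have : (L - L0)ᵀ = L - L0 := by
      rw [Matrix.transpose_sub, hLsym.eq, hL0sym.eq]
    exact (Matrix.conjTranspose_eq_transpose_of_trivial _).trans this
  · intro x
    have hx : (star x : Fin n → ℝ) = x := by simp
    rw [hx, Matrix.sub_mulVec, dotProduct_sub, hquad x, hQ0 x]
    have : β * w * (x i - x k) ^ 2 + β * w * (x k - x j) ^ 2
          + (2 - β) * w * (x i) ^ 2 + (β ^ 2 - 2 * β) * w * (x k) ^ 2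
          + (2 - β) * w * (x j) ^ 2 - w * (x i - x j) ^ 2
        = w * (x i + x j - β * x k) ^ 2 := by ring
    rw [this]
    positivity
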